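/- arXiv:math/9605203 — 6 statements merged into one kernel-verified Lean document; each statement's English description precedes it below -/
import Mathlib

section
/- In an abelian maximal abelian subgroup setting: an abelian subgroup A of a CSA group G is malnormal in G if and only if A is a maximal abelian subgroup of G. -/
/-- A subgroup `H` of a group `G` is malnormal if `H ∩ gHg⁻¹ = 1` for all `g ∉ H`. -/
def Malnormal {G : Type*} [Group G] (H : Subgroup G) : Prop :=
  ∀ x : G, x ∉ H → ∀ g ∈ H, x⁻¹ * g * x ∈ H → g = 1

/-- A subgroup is maximal abelian if it is abelian and not properly contained in
any abelian subgroup. -/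
def MaximalAbelian {G : Type*} [Group G] (M : Subgroup G) : Prop :=
  IsMulCommutative M ∧ ∀ N : Subgroup G, IsMulCommutative N → M ≤ N → N = M

/-- A group is CSA if all its maximal abelian subgroups are malnormal. -/
def IsCSA (G : Type*) [Group G] : Prop :=
  ∀ M : Subgroup G, MaximalAbelian M → Malnormal M

/-- A nontrivial abelian subgroup of a CSA group is malnormal if and only if it
is maximal abelian. -/
theorem malnormal_iff_maximalAbelian {G : Type*} [Group G] (hG : IsCSA G)
    (A : Subgroup G) (hA : IsMulCommutative A) (hbot : A ≠ ⊥) :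
    Malnormal A ↔ MaximalAbelian A := by
  constructor
  · intro hmal
    refine ⟨hA, fun N hN hAN => ?_⟩
    apply le_antisymm _ hAN
    intro x hx
    by_contra hxA
    obtain ⟨g, hgA, hg1⟩ : ∃ g ∈ A, g ≠ 1 := by
      by_contra h
      push_neg at h
      exact hbot (Subgroup.eq_bot_iff_forall A |>.mpr h)
    have hcomm : (⟨g, hAN hgA⟩ : N) * ⟨x, hx⟩ = ⟨x, hx⟩ * ⟨g, hAN hgA⟩ :=
      hN.is_comm.comm _ _
    have hxg : x⁻¹ * g * x = g := by
      have := congrArg Subtype.val hcomm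
      simp only [Subgroup.coe_mul] at this
      rw [mul_assoc, this, ← mul_assoc, inv_mul_cancel, one_mul]
    exact hg1 (hmal x hxA g hgA (by rw [hxg]; exact hgA))
  · exact fun h => hG A h
end

section
/- The factors of a free product are malnormal: if P = G * H is a free product, then G is a malnormal subgroup of P. -/
namespace MalnormalAux

open Monoid Monoid.CoprodI

variable {ι : Type*} {G : ι → Type*} [∀ i, Group (G i)] [DecidableEq ι]
  [∀ i, DecidableEq (G i)]

lemma equiv_mul (x y : CoprodI G) : Word.equiv (x * y) = x • Word.equiv y := by
  simp only [Word.equiv, Equiv.coe_fn_mk]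
  rw [mul_smul]

lemma equiv_one : Word.equiv (1 : CoprodI G) = Word.empty := by
  simp only [Word.equiv, Equiv.coe_fn_mk]
  rw [one_smul]

lemma prod_equiv (x : CoprodI G) : (Word.equiv x).prod = x :=
  Word.equiv.symm_apply_apply x

lemma equiv_prod (u : Word G) : Word.equiv u.prod = u :=
  Word.equiv.apply_symm_apply u

lemma fstIdx_smul {i : ι} (m : G i) (hm : m ≠ 1) (w : Word G) (hw : w.fstIdx ≠ some i) :
    (of m • w).fstIdx = some i := by
  rw [← Word.cons_eq_smul (h1 := hw) (h2 := hm), Word.fstIdx_cons]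

lemma fstIdx_equiv_of {i : ι} (m : G i) (hm : m ≠ 1) :
    (Word.equiv (of m : CoprodI G)).fstIdx = some i := by
  have h : Word.equiv (of m : CoprodI G) = of m • Word.empty := rfl
  rw [h]
  exact fstIdx_smul m hm _ (by simp [Word.fstIdx])

lemma equiv_prod_mul_of {i : ι} (b : G i) (u : Word G) (hune : u ≠ Word.empty) :
    Word.equiv (u.prod * of b) = Word.empty ∨
      (Word.equiv (u.prod * of b)).fstIdx = u.fstIdx := by
  induction u using Word.consRecOn with
  | empty => exact absurd rfl hune
  | cons k m u' h1 h2 ih =>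
    rcases eq_or_ne u' Word.empty with rfl | hu'
    · rcases eq_or_ne k i with rfl | hk
      · have he : (Word.cons m Word.empty h1 h2).prod * of b = of (m * b) := by
          rw [Word.prod_cons, Word.prod_empty, mul_one, map_mul]
        rw [he]
        rcases eq_or_ne (m * b) 1 with hmb | hmb
        · left; rw [hmb, map_one, equiv_one]
        · right; rw [fstIdx_equiv_of _ hmb, Word.fstIdx_cons]
      · right
        have hb' : (Word.equiv (of b : CoprodI G)).fstIdx ≠ some k := by
          rcases eq_or_ne b 1 with rfl | hb
          · rw [map_one, equiv_one]; simp [Word.fstIdx]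
          · rw [fstIdx_equiv_of _ hb]
            simpa using Ne.symm hk
        have he : (Word.cons m Word.empty h1 h2).prod * of b = of m * of b := by
          rw [Word.prod_cons, Word.prod_empty, mul_one]
        rw [he, equiv_mul, fstIdx_smul m h2 _ hb', Word.fstIdx_cons]
    · rw [Word.prod_cons, mul_assoc, equiv_mul]
      rcases ih hu' with h | h
      · right
        rw [h, fstIdx_smul m h2 _ (by simp [Word.fstIdx]), Word.fstIdx_cons]
      · right
        rw [fstIdx_smul m h2 _ (by rw [h]; exact h1), Word.fstIdx_cons]

lemma core {i : ι} {u : Word G} (hu : u.fstIdx ≠ some i) {a b : G i}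
    (h : of a * u.prod = u.prod * of b) : u = Word.empty ∨ a = 1 := by
  rcases eq_or_ne u Word.empty with rfl | hune
  · exact Or.inl rfl
  rcases eq_or_ne a 1 with rfl | ha
  · exact Or.inr rfl
  exfalso
  have h2 := congrArg Word.equiv h
  rw [equiv_mul, equiv_prod] at h2
  have hl : (of a • u).fstIdx = some i := fstIdx_smul a ha u hu
  rcases equiv_prod_mul_of b u hune with h3 | h3
  · rw [← h2] at h3
    rw [h3] at hl
    simp [Word.fstIdx] at hl
  · rw [← h2, hl] at h3
    exact hu h3.symm

lemma coprodI_malnormal {ι : Type*} {G : ι → Type*} [∀ i, Group (G i)] (i : ι)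
    (x : CoprodI G) (hx : x ∉ (of : G i →* CoprodI G).range)
    (a : G i) (hconj : x⁻¹ * of a * x ∈ (of : G i →* CoprodI G).range) : a = 1 := by
  classical
  rw [MonoidHom.mem_range] at hconj
  obtain ⟨b, hb⟩ := hconj
  have hxb : of a * x = x * of b := by rw [hb]; group
  set p := Word.equivPair i (Word.equiv x) with hp
  have hxdecomp : x = of p.head * p.tail.prod := by
    have hr : Word.rcons p = Word.equiv x := by
      rw [hp, ← Word.equivPair_symm, Equiv.symm_apply_apply]
    calc x = (Word.equiv x).prod := (prod_equiv x).symm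
    _ = (Word.rcons p).prod := by rw [hr]
    _ = of p.head * p.tail.prod := Word.prod_rcons p
  have hxb' : of a * (of p.head * p.tail.prod) = of p.head * p.tail.prod * of b := by
    rw [← hxdecomp]; exact hxb
  have key : of (p.head⁻¹ * a * p.head) * p.tail.prod = p.tail.prod * of b := by
    rw [map_mul, map_mul, map_inv, mul_assoc, mul_assoc, inv_mul_eq_iff_eq_mul,
      ← mul_assoc (of p.head)]
    exact hxb'
  rcases core p.fstIdx_ne key with ht | ha
  · exact absurd (MonoidHom.mem_range.mpr
      ⟨p.head, by rw [hxdecomp, ht, Word.prod_empty, mul_one]⟩) hx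
  · calc a = p.head * (p.head⁻¹ * a * p.head) * p.head⁻¹ := by group
    _ = 1 := by rw [ha]; group


universe u v

variable (G : Type u) (H : Type v) [Group G] [Group H]

/-- The two-element family of groups `![G, H]` (with `ULift`s to equalize universes). -/
def Fam : Bool → Type (max u v) := fun b => Bool.rec (ULift.{u} H) (ULift.{v} G) b

instance famGroup : ∀ b, Group (Fam G H b)
  | true => inferInstanceAs (Group (ULift G))
  | false => inferInstanceAs (Group (ULift H))

open Monoid in
/-- The canonical map `G ∗ H →* CoprodI (Fam G H)`. -/
def fwdHom : Coprod G H →* CoprodI (Fam G H) :=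
  Coprod.lift
    ((CoprodI.of (i := true)).comp MulEquiv.ulift.symm.toMonoidHom)
    ((CoprodI.of (i := false)).comp MulEquiv.ulift.symm.toMonoidHom)

open Monoid in
/-- The canonical map `CoprodI (Fam G H) →* G ∗ H`. -/
def bwdHom : CoprodI (Fam G H) →* Coprod G H :=
  CoprodI.lift fun b => Bool.rec
    (motive := fun b => Fam G H b →* Coprod G H)
    (Coprod.inr.comp MulEquiv.ulift.toMonoidHom)
    (Coprod.inl.comp MulEquiv.ulift.toMonoidHom) b

open Monoid in
lemma bwd_fwd : (bwdHom G H).comp (fwdHom G H) = MonoidHom.id _ := by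
  apply Coprod.hom_ext <;> ext g <;>
    simp only [MonoidHom.comp_apply, MonoidHom.id_apply, fwdHom, Coprod.lift_apply_inl,
      Coprod.lift_apply_inr, bwdHom, CoprodI.lift_of, MonoidHom.coe_comp, Function.comp_apply,
      MulEquiv.coe_toMonoidHom, MulEquiv.apply_symm_apply] <;> rfl

end MalnormalAux

/-- The factors of a free product are malnormal: the canonical image of `G` in
the free product `G ∗ H` is a malnormal subgroup. -/
theorem coprod_inl_malnormal (G H : Type*) [Group G] [Group H] :
    Malnormal (Monoid.Coprod.inl : G →* Monoid.Coprod G H).range := by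
  classical
  set F := MalnormalAux.Fam G H with hF
  set fwd := MalnormalAux.fwdHom G H with hfwd
  set bwd := MalnormalAux.bwdHom G H with hbwd
  have hbf : ∀ x, bwd (fwd x) = x := by
    intro x
    calc bwd (fwd x) = (bwd.comp fwd) x := rfl
    _ = x := by rw [hbwd, hfwd, MalnormalAux.bwd_fwd]; rfl
  have hfinl : ∀ c : G, fwd (Monoid.Coprod.inl c)
      = (Monoid.CoprodI.of : F true →* Monoid.CoprodI F) (MulEquiv.ulift.symm c) := fun c => rfl
  have hbof : ∀ u : F true, bwd (Monoid.CoprodI.of u)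
      = Monoid.Coprod.inl (MulEquiv.ulift (α := G) u) := by
    intro u
    rw [hbwd, MalnormalAux.bwdHom, Monoid.CoprodI.lift_of]
    rfl
  intro x hx g hg hconj
  rw [MonoidHom.mem_range] at hg
  obtain ⟨g₀, rfl⟩ := hg
  have hx' : fwd x ∉ (Monoid.CoprodI.of : F true →* Monoid.CoprodI F).range := by
    rintro ⟨u, hu⟩
    apply hx
    rw [MonoidHom.mem_range]
    refine ⟨MulEquiv.ulift (α := G) u, ?_⟩
    have h2 := congrArg bwd hu
    rw [hbf, hbof] at h2
    exact h2
  have hconj' : (fwd x)⁻¹ * (Monoid.CoprodI.of : F true →* Monoid.CoprodI F) (MulEquiv.ulift.symm g₀) * fwd x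
      ∈ (Monoid.CoprodI.of : F true →* Monoid.CoprodI F).range := by
    rw [MonoidHom.mem_range] at hconj ⊢
    obtain ⟨c, hc⟩ := hconj
    refine ⟨MulEquiv.ulift.symm c, ?_⟩
    have h2 := congrArg fwd hc
    rw [map_mul, map_mul, map_inv, hfinl, hfinl] at h2
    exact h2
  have h1 := MalnormalAux.coprodI_malnormal true (fwd x) hx' (MulEquiv.ulift.symm g₀) hconj'
  have hg1 : g₀ = 1 := by
    have := congrArg (MulEquiv.ulift (α := G)) h1
    simp at this
    exact this.trans rfl
  rw [hg1, map_one]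
end

section
/- Let T be a nonabelian semidirect product A ⋊ ⟨t⟩ of the additive group A of a finitely generated subring of ℚ by an infinite cyclic group ⟨t⟩. Then every epimorphism ψ from T onto a torsion-free group W that is nontrivial on A and on ⟨t⟩ is an isomorphism. -/
open Multiplicative SemidirectProduct

private lemma aux_torsionfree {W : Type*} [Group W] (hW : ∀ g : W, g ≠ 1 → ¬IsOfFinOrder g)
    (g : W) (m : ℤ) (hm : m ≠ 0) (h : g ^ m = 1) : g = 1 := by
  by_contra hg
  exact hW g hg (isOfFinOrder_iff_zpow_eq_one.2 ⟨m, hm, h⟩)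

/-- Let `T` be a nonabelian semidirect product of the (additive group of a)
finitely generated subring `A` of `ℚ` by an infinite cyclic group `⟨t⟩`.
Every epimorphism from `T` onto a torsion-free group which is nontrivial on `A`
and on `⟨t⟩` is an isomorphism. -/
theorem sdprod_epi_torsionFree_injective (A : Subring ℚ)
    (hfg : ∃ s : Finset ℚ, Subring.closure (↑s : Set ℚ) = A)
    (φ : Multiplicative ℤ →* MulAut (Multiplicative A))
    (hnonab : ∃ u v : Multiplicative A ⋊[φ] Multiplicative ℤ, u * v ≠ v * u)
    (W : Type*) [Group W] (hW : ∀ g : W, g ≠ 1 → ¬IsOfFinOrder g)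
    (ψ : Multiplicative A ⋊[φ] Multiplicative ℤ →* W)
    (hsurj : Function.Surjective ψ)
    (hA : ∃ a : Multiplicative A, ψ (SemidirectProduct.inl a) ≠ 1)
    (ht : ψ (SemidirectProduct.inr (Multiplicative.ofAdd 1)) ≠ 1) :
    Function.Injective ψ := by
  -- the automorphism given by the generator of ℤ
  set σ : MulAut (Multiplicative A) := φ (ofAdd 1) with hσ
  -- the corresponding additive map A →+ A
  set f : A →+ A := AddMonoidHom.mk' (fun a => toAdd (σ (ofAdd a)))
    (by intro a b
        show toAdd (σ (ofAdd a * ofAdd b)) = _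
        rw [map_mul]; rfl) with hf
  set q : ℚ := (f 1 : ℚ) with hq
  -- σ is multiplication by q
  have key : ∀ a : A, (f a : ℚ) = q * a := by
    intro a
    set r : ℚ := (a : ℚ) with hr
    have h1 : (r.den : ℤ) • a = r.num • (1 : A) := by
      apply Subtype.ext
      push_cast [zsmul_eq_mul]
      rw [mul_one, ← hr, mul_comm, Rat.mul_den_eq_num]
    have h2 := congrArg f h1
    rw [map_zsmul, map_zsmul] at h2
    have h3 : (r.den : ℚ) * (f a : ℚ) = (r.num : ℚ) * q := by
      have h2' := congrArg (fun x : A => (x : ℚ)) h2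
      push_cast [zsmul_eq_mul] at h2'
      rw [hq]
      exact_mod_cast h2'
    have hden : (r.den : ℚ) ≠ 0 := by exact_mod_cast r.den_ne_zero
    have hnd : (r.num : ℚ) = r.den * r := by
      rw [← Rat.mul_den_eq_num]; ring
    refine mul_left_cancel₀ hden ?_
    rw [h3, hnd]; ring
  -- q ≠ 1, since otherwise T would be abelian
  have hq1 : q ≠ 1 := by
    intro h
    have hfid : ∀ a : A, f a = a := by
      intro a
      apply Subtype.ext
      rw [key a, h, one_mul]
    have hσid : σ = 1 := by
      ext x
      have h5 : toAdd (σ (ofAdd (toAdd x))) = toAdd x := congrArg _ (hfid (toAdd x))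
      simpa using h5
    have hφtriv : ∀ z : Multiplicative ℤ, φ z = 1 := by
      intro z
      have hz : z = (ofAdd 1) ^ (toAdd z) := by
        simp [← ofAdd_zsmul]
      rw [hz, map_zpow, ← hσ, hσid, one_zpow]
    obtain ⟨u, v, huv⟩ := hnonab
    apply huv
    apply SemidirectProduct.ext
    · show u.left * φ u.right v.left = v.left * φ v.right u.left
      rw [hφtriv, hφtriv]
      exact mul_comm _ _
    · exact mul_comm _ _
  -- the kernel meets A trivially
  have hker : ∀ b : Multiplicative A, ψ (inl b) = 1 → b = 1 := by
    intro b hb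
    by_contra hb1
    obtain ⟨a0, ha0⟩ := hA
    set r : ℚ := ((toAdd b : A) : ℚ) with hr
    set s : ℚ := ((toAdd a0 : A) : ℚ) with hs
    have hrne : r ≠ 0 := by
      intro h
      apply hb1
      have h6 : (toAdd b : A) = 0 := Subtype.ext h
      exact toAdd.injective h6
    have h1 : (s.den : ℚ) * s = s.num := by rw [mul_comm, Rat.mul_den_eq_num]
    have h2 : (r.den : ℚ) * r = r.num := by rw [mul_comm, Rat.mul_den_eq_num]
    have hm : ((s.den : ℤ) * r.num) ≠ 0 := by
      apply mul_ne_zero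
      · exact_mod_cast s.den_ne_zero
      · exact Rat.num_ne_zero.2 hrne
    have heq : a0 ^ ((s.den : ℤ) * r.num) = b ^ ((r.den : ℤ) * s.num) := by
      apply toAdd.injective
      rw [toAdd_zpow, toAdd_zpow]
      apply Subtype.ext
      push_cast [zsmul_eq_mul]
      rw [← hs, ← hr]
      linear_combination (r.num : ℚ) * h1 - (s.num : ℚ) * h2
    have h7 : ψ (inl a0) ^ ((s.den : ℤ) * r.num) = 1 := by
      rw [← map_zpow, ← map_zpow, heq, map_zpow, map_zpow, hb, one_zpow]
    exact ha0 (aux_torsionfree hW _ _ hm h7)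
  rw [injective_iff_map_eq_one]
  intro x hx
  -- ψ (inl x.left) is the inverse of ψ (inr x.right)
  have hxl1 : ψ (inl x.left) = (ψ (inr x.right))⁻¹ := by
    have h8 := congrArg ψ (inl_left_mul_inr_right x)
    rw [map_mul, hx] at h8
    exact eq_inv_of_mul_eq_one_left h8
  -- ψ (inl (σ x.left)) = ψ (inl x.left)
  have hσl : ψ (inl (σ x.left)) = ψ (inl x.left) := by
    have h9 := inl_aut (φ := φ) (ofAdd (1:ℤ)) x.left
    rw [← hσ] at h9
    have e1 : (ψ (inr x.right))⁻¹ = ψ (inr x.right⁻¹) := by rw [map_inv, map_inv]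
    have e2 : (inr (ofAdd (1:ℤ)) : Multiplicative A ⋊[φ] Multiplicative ℤ) *
        inr x.right⁻¹ * inr ((ofAdd (1:ℤ))⁻¹) = inr x.right⁻¹ := by
      rw [← map_mul, ← map_mul]
      congr 1
      rw [mul_comm (ofAdd (1:ℤ)) x.right⁻¹, mul_inv_cancel_right]
    rw [h9, map_mul, map_mul, hxl1, e1, ← map_mul, ← map_mul, e2]
  have hconj : ψ (inl (σ x.left * x.left⁻¹)) = 1 := by
    rw [map_mul, map_mul, map_inv, map_inv, hσl, mul_inv_cancel]
  have hxl : x.left = 1 := by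
    have h2 := hker _ hconj
    have h3 : σ x.left = x.left := by rwa [mul_inv_eq_one] at h2
    have h4 : (f (toAdd x.left) : ℚ) = ((toAdd x.left : A) : ℚ) := by
      show ((toAdd (σ (ofAdd (toAdd x.left))) : A) : ℚ) = _
      rw [ofAdd_toAdd, h3]
    rw [key] at h4
    have h5 : ((toAdd x.left : A) : ℚ) = 0 := by
      by_contra h
      exact hq1 (mul_right_cancel₀ h (by rw [h4, one_mul]))
    exact toAdd.injective (Subtype.ext h5)
  -- now x = inr x.right, and ψ (inr x.right) = 1 forces x.right = 1
  have hx2 : ψ (inr x.right) = 1 := by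
    rw [← inl_left_mul_inr_right x] at hx
    rwa [hxl, map_one, one_mul] at hx
  have hx3 : ψ (inr (ofAdd 1)) ^ (toAdd x.right) = 1 := by
    rw [← map_zpow, ← map_zpow]
    have h10 : (ofAdd (1:ℤ)) ^ (toAdd x.right) = x.right := by
      simp [← ofAdd_zsmul]
    rwa [h10]
  have hxr : toAdd x.right = 0 := by
    by_contra h
    exact ht (aux_torsionfree hW _ _ h hx3)
  have hxr1 : x.right = 1 := toAdd.injective hxr
  rw [← inl_left_mul_inr_right x, hxl, hxr1, map_one, map_one, mul_one]
end

section
/- Every nonabelian Baumslag-Solitar group B(m,n) with m ≠ n is not residually p for any prime p not dividing m − n: the image of x in the pro-p completion is trivial, since in any nilpotent quotient of p-power order the relation x^(n−m) = [xᵐ, y⁻¹] forces x into every term of the lower central series. -/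
/-- The relation `y xᵐ y⁻¹ = xⁿ` of the Baumslag–Solitar group `B(m,n)`, with
`x` encoded by `false` and `y` by `true`. -/
def bsRels (m n : ℤ) : Set (FreeGroup Bool) :=
  {FreeGroup.of true * FreeGroup.of false ^ m * (FreeGroup.of true)⁻¹ *
    (FreeGroup.of false ^ n)⁻¹}

/-- The Baumslag–Solitar group `B(m,n) = ⟨x, y | yxᵐy⁻¹ = xⁿ⟩`. -/
def BS (m n : ℤ) : Type := PresentedGroup (bsRels m n)

instance (m n : ℤ) : Group (BS m n) := by unfold BS; infer_instance

/-- A group `G` is residually `p` if every nontrivial element survives in some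
finite `p`-group quotient. -/
def ResiduallyP (p : ℕ) (G : Type*) [Group G] : Prop :=
  ∀ g : G, g ≠ 1 → ∃ (P : Type) (_ : Group P) (_ : Fintype P) (f : G →* P),
    IsPGroup p P ∧ f g ≠ 1

/-- In a finite `p`-group with `p ∤ m - n`, the Baumslag–Solitar relation forces `a = 1`:
in each successive quotient of the lower central series the relation
`a ^ (n - m) = [aᵐ, b]⁻¹` forces `a` one step deeper, and the series reaches `⊥`. -/
lemma bs_pgroup_aux (m n : ℤ) (p : ℕ) (hp : p.Prime)
    (hdvd : ¬ ((p : ℤ) ∣ m - n)) (P : Type) [Group P] [Fintype P]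
    (hP : IsPGroup p P) (a b : P) (hrel : b * a ^ m * b⁻¹ = a ^ n) : a = 1 := by
  have hfact : Fact p.Prime := ⟨hp⟩
  have hpow : a ^ (n - m) = (a ^ m * b * (a ^ m)⁻¹ * b⁻¹)⁻¹ := by
    have : (a ^ m * b * (a ^ m)⁻¹ * b⁻¹)⁻¹ = b * a ^ m * b⁻¹ * (a ^ m)⁻¹ := by group
    rw [this, hrel, ← zpow_neg, ← zpow_add, ← sub_eq_add_neg]
  have hstep : ∀ k, a ∈ (⊤ : Subgroup P).lowerCentralSeries k → a ∈ (⊤ : Subgroup P).lowerCentralSeries (k + 1) := by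
    intro k hk
    -- a ^ (n - m) lies in the next term of the lower central series
    have hmem : a ^ (n - m) ∈ (⊤ : Subgroup P).lowerCentralSeries (k + 1) := by
      rw [hpow]
      refine ((⊤ : Subgroup P).lowerCentralSeries (k + 1)).inv_mem ?_
      rw [Subgroup.mem_lowerCentralSeries_succ_iff]
      exact Subgroup.subset_closure ⟨a ^ m, ((⊤ : Subgroup P).lowerCentralSeries k).zpow_mem hk m, b,
        Subgroup.mem_top b, rfl⟩
    set N := (⊤ : Subgroup P).lowerCentralSeries (k + 1) with hN
    set q : P ⧸ N := QuotientGroup.mk a with hq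
    have hq1 : q ^ (n - m) = 1 := by
      rw [hq, ← QuotientGroup.mk_zpow, QuotientGroup.eq_one_iff]
      exact hmem
    have hdvd1 : (orderOf q : ℤ) ∣ (n - m) := orderOf_dvd_iff_zpow_eq_one.mpr hq1
    obtain ⟨j, hj⟩ := (hP.to_quotient N) q
    have hdvd2 : orderOf q ∣ p ^ j := orderOf_dvd_of_pow_eq_one hj
    obtain ⟨i, hi, hoi⟩ := (Nat.dvd_prime_pow hp).mp hdvd2
    have hi0 : i = 0 := by
      by_contra h0
      have hpq : (p : ℤ) ∣ (orderOf q : ℤ) := by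
        exact_mod_cast hoi ▸ dvd_pow_self p h0
      have h2 : (p : ℤ) ∣ -(n - m) := dvd_neg.mpr (hpq.trans hdvd1)
      rw [neg_sub] at h2
      exact hdvd h2
    have : q = 1 := orderOf_eq_one_iff.mp (by rw [hoi, hi0, pow_zero])
    rwa [hq, QuotientGroup.eq_one_iff] at this
  have hall : ∀ k, a ∈ (⊤ : Subgroup P).lowerCentralSeries k := by
    intro k
    induction k with
    | zero => exact Subgroup.mem_top a
    | succ k ih => exact hstep k ih
  have : Group.IsNilpotent P := hP.isNilpotent
  obtain ⟨c, hc⟩ := nilpotent_iff_lowerCentralSeries.mp this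
  have := hall c
  rwa [hc, Subgroup.mem_bot] at this

/-- The defining relation holds in the presented group. -/
lemma bs_relation (m n : ℤ) :
    (PresentedGroup.of true : PresentedGroup (bsRels m n)) *
      PresentedGroup.of false ^ m * (PresentedGroup.of true)⁻¹ *
      (PresentedGroup.of false ^ n)⁻¹ = 1 := by
  have h1 : PresentedGroup.mk (bsRels m n)
      (FreeGroup.of true * FreeGroup.of false ^ m * (FreeGroup.of true)⁻¹ *
        (FreeGroup.of false ^ n)⁻¹) = 1 :=
    (QuotientGroup.eq_one_iff _).mpr
      (Subgroup.subset_normalClosure (Set.mem_singleton _))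
  simpa only [map_mul, map_zpow, map_inv, PresentedGroup.of] using h1

theorem Equiv.zpow_addRight : ∀ (a : ℚ) (k : ℤ), Equiv.addRight a ^ k = Equiv.addRight (k • a) := by
  intro a k
  induction k using Int.induction_on with
  | zero => ext t; simp
  | succ i ih => rw [zpow_add_one, ih]; ext t; simp [add_smul]; ring
  | pred i ih => rw [zpow_sub_one, ih]; ext t; simp [sub_smul, Equiv.Perm.inv_def]; ring

/-- The generator `x` is nontrivial in `B(m,n)` when `m ≠ 0`: it acts as a nontrivial
translation in the affine action on `ℚ`. -/
lemma bs_x_ne_one (m n : ℤ) (hm : m ≠ 0) (hn : n ≠ 0) :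
    (PresentedGroup.of false : PresentedGroup (bsRels m n)) ≠ 1 := by
  have hmQ : (m : ℚ) ≠ 0 := Int.cast_ne_zero.mpr hm
  have hnQ : (n : ℚ) ≠ 0 := Int.cast_ne_zero.mpr hn
  have hc : (n : ℚ) / m ≠ 0 := div_ne_zero hnQ hmQ
  set Y : Equiv.Perm ℚ := Equiv.mulLeft₀ ((n : ℚ) / m) hc with hY
  set X : Equiv.Perm ℚ := Equiv.addRight (1 : ℚ) with hX
  set f : Bool → Equiv.Perm ℚ := fun b => if b then Y else X with hf
  have hrel : ∀ r ∈ bsRels m n, FreeGroup.lift f r = 1 := by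
    intro r hr
    rw [bsRels, Set.mem_singleton_iff] at hr
    subst hr
    simp only [map_mul, map_zpow, map_inv, FreeGroup.lift_apply_of, hf]
    simp only [Bool.false_eq_true, if_true, if_false]
    rw [mul_inv_eq_one]
    rw [hX, Equiv.zpow_addRight, Equiv.zpow_addRight]
    ext t
    simp only [Equiv.Perm.mul_apply, Equiv.Perm.inv_def, hY, hX,
      Equiv.mulLeft₀_apply, Equiv.mulLeft₀_symm_apply, Equiv.coe_addRight, smul_eq_mul]
    field_simp
    ring
  intro h1
  have hφ := PresentedGroup.toGroup.of (f := f) hrel (x := false)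
  rw [h1, map_one] at hφ
  have h0 : f false 0 = (1 : Equiv.Perm ℚ) 0 := by rw [← hφ]
  simp [hf, hX] at h0

/-- A nonabelian Baumslag–Solitar group `B(m,n)` with `m ≠ n` is not
residually `p` for any prime `p` not dividing `m - n`. -/
theorem bs_not_residuallyP (m n : ℤ) (hmn : m * n ≠ 0) (hne : m ≠ n)
    (p : ℕ) (hp : p.Prime) (hdvd : ¬ ((p : ℤ) ∣ m - n)) :
    ¬ ResiduallyP p (BS m n) := by
  have hm : m ≠ 0 := left_ne_zero_of_mul hmn
  intro hres
  obtain ⟨P, _, _, fP, hP, hfx⟩ :=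
    hres (show BS m n from PresentedGroup.of false) (bs_x_ne_one m n hm (right_ne_zero_of_mul hmn))
  apply hfx
  have hrel := congrArg fP (bs_relation m n)
  erw [map_mul, map_mul, map_mul, map_inv, map_inv, map_zpow, map_zpow, map_one] at hrel
  rw [mul_inv_eq_one] at hrel
  exact bs_pgroup_aux m n p hp hdvd P hP (fP (PresentedGroup.of false))
    (fP (PresentedGroup.of true)) hrel
end

section
/- The group G = ⟨x, y | [[x,y],y] = 1⟩ is not a CSA group: writing yᵢ = x⁻ⁱyxⁱ, the elements y₀ and y₁ commute, and the maximal abelian subgroup containing y₁ intersects its conjugate by x nontrivially although x does not normalize it. -/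
open scoped commutatorElement

/-- The relation `[[x,y],y] = 1`, with `x` encoded by `false` and `y` by `true`. -/
def oneRel : Set (FreeGroup Bool) :=
  {⁅⁅FreeGroup.of false, FreeGroup.of true⁆, FreeGroup.of true⁆}

/-- The one-relator group `G = ⟨x, y | [[x,y],y] = 1⟩`. -/
def OneRelGroup : Type := PresentedGroup oneRel

instance : Group OneRelGroup := by unfold OneRelGroup; infer_instance

/-- The generator `x`. -/
def gx : OneRelGroup := PresentedGroup.of false

/-- The generator `y`. -/
def gy : OneRelGroup := PresentedGroup.of true

/-- `yᵢ = x⁻ⁱ y xⁱ`. -/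
def gyi (i : ℤ) : OneRelGroup := gx ^ (-i) * gy * gx ^ i

/-! ### Auxiliary: the Heisenberg group over ℤ -/

/-- The integer Heisenberg group, realized as triples `(a, b, c)`. -/
@[ext]
structure H3 where
  a : ℤ
  b : ℤ
  c : ℤ

namespace H3

instance : Mul H3 := ⟨fun p q => ⟨p.a + q.a, p.b + q.b, p.c + q.c + p.a * q.b⟩⟩
instance : One H3 := ⟨⟨0, 0, 0⟩⟩
instance : Inv H3 := ⟨fun p => ⟨-p.a, -p.b, -p.c + p.a * p.b⟩⟩

@[simp] lemma mul_a (p q : H3) : (p * q).a = p.a + q.a := rfl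
@[simp] lemma mul_b (p q : H3) : (p * q).b = p.b + q.b := rfl
@[simp] lemma mul_c (p q : H3) : (p * q).c = p.c + q.c + p.a * q.b := rfl
@[simp] lemma one_a : (1 : H3).a = 0 := rfl
@[simp] lemma one_b : (1 : H3).b = 0 := rfl
@[simp] lemma one_c : (1 : H3).c = 0 := rfl
@[simp] lemma inv_a (p : H3) : (p⁻¹).a = -p.a := rfl
@[simp] lemma inv_b (p : H3) : (p⁻¹).b = -p.b := rfl
@[simp] lemma inv_c (p : H3) : (p⁻¹).c = -p.c + p.a * p.b := rfl

instance : Group H3 where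
  mul_assoc p q r := by ext <;> simp <;> ring
  one_mul p := by ext <;> simp
  mul_one p := by ext <;> simp
  inv_mul_cancel p := by ext <;> simp

/-- The image of `x`. -/
def X : H3 := ⟨1, 0, 0⟩
/-- The image of `y`. -/
def Y : H3 := ⟨0, 1, 0⟩

end H3

/-- The homomorphism `G → H3` sending `x ↦ X`, `y ↦ Y`. -/
def φ : OneRelGroup →* H3 :=
  PresentedGroup.toGroup (f := fun b => if b then H3.Y else H3.X) (by
    rintro r hr
    rcases hr with rfl
    rw [map_commutatorElement, map_commutatorElement]
    simp only [FreeGroup.lift_apply_of, if_true, if_false]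
    ext <;> simp [commutatorElement_def, H3.X, H3.Y])

@[simp] lemma φ_gx : φ gx = H3.X := PresentedGroup.toGroup.of _
@[simp] lemma φ_gy : φ gy = H3.Y := PresentedGroup.toGroup.of _

/-- The homomorphism `G → ℤ` sending `x ↦ 1`, `y ↦ 0`. -/
def ψ : OneRelGroup →* Multiplicative ℤ :=
  PresentedGroup.toGroup (f := fun b => if b then 1 else Multiplicative.ofAdd 1) (by
    rintro r hr
    rcases hr with rfl
    rw [map_commutatorElement]
    exact commutatorElement_eq_one_iff_commute.mpr (Commute.all _ _))

@[simp] lemma ψ_gx : ψ gx = Multiplicative.ofAdd 1 := PresentedGroup.toGroup.of _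
@[simp] lemma ψ_gy : ψ gy = 1 := PresentedGroup.toGroup.of _

lemma gyi_zero : gyi 0 = gy := by simp [gyi]

lemma gyi_one : gyi 1 = gx⁻¹ * gy * gx := by
  simp [gyi, zpow_neg, zpow_one]

/-- The defining relation holds in `G`. -/
lemma hrel : ⁅⁅gx, gy⁆, gy⁆ = 1 := by
  have : (PresentedGroup.mk oneRel) ⁅⁅FreeGroup.of false, FreeGroup.of true⁆, FreeGroup.of true⁆
      = 1 := by
    refine (QuotientGroup.eq_one_iff _).mpr ?_
    exact Subgroup.subset_normalClosure rfl
  rw [map_commutatorElement, map_commutatorElement] at this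
  exact this

lemma hcommute : Commute (gyi 0) (gyi 1) := by
  rw [commute_iff_eq, gyi_zero, gyi_one, ← mul_inv_eq_one]
  have h : gy * (gx⁻¹ * gy * gx) * ((gx⁻¹ * gy * gx) * gy)⁻¹
      = gx⁻¹ * ⁅⁅gx, gy⁆, gy⁆ * gx := by
    rw [commutatorElement_def, commutatorElement_def]
    group
  rw [h, hrel]
  group

lemma phi_gyi_zero : φ (gyi 0) = H3.Y := by rw [gyi_zero, φ_gy]

lemma phi_gyi_one : φ (gyi 1) = ⟨0, 1, -1⟩ := by
  rw [gyi_one]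
  simp only [map_mul, map_inv, φ_gx, φ_gy]
  ext <;> simp [H3.X, H3.Y]

lemma gyi_one_ne_one : gyi 1 ≠ 1 := by
  intro h
  have := congrArg φ h
  rw [phi_gyi_one, map_one] at this
  have := congrArg H3.b this
  simp at this

lemma gyi_zero_ne_one : gyi 0 ≠ 1 := by
  intro h
  have := congrArg φ h
  rw [phi_gyi_zero, map_one] at this
  have := congrArg H3.b this
  simp [H3.Y] at this

lemma gyi_one_ne_gyi_zero : gyi 1 ≠ gyi 0 := by
  intro h
  have := congrArg φ h
  rw [phi_gyi_one, phi_gyi_zero] at this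
  have := congrArg H3.c this
  simp [H3.Y] at this

lemma gx_not_mem : gx ∉ Subgroup.closure {gyi 0, gyi 1} := by
  intro hx
  have hle : Subgroup.closure {gyi 0, gyi 1} ≤ ψ.ker := by
    rw [Subgroup.closure_le]
    rintro z (rfl | rfl)
    · simp [MonoidHom.mem_ker, gyi_zero]
    · simp [MonoidHom.mem_ker, gyi_one]
  have := hle hx
  rw [MonoidHom.mem_ker, ψ_gx] at this
  exact absurd this (by decide)

/-- Every commutative subgroup is contained in a maximal abelian subgroup. -/
lemma exists_maximalAbelian {G : Type*} [Group G] (A : Subgroup G) (hA : IsMulCommutative A) :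
    ∃ M : Subgroup G, A ≤ M ∧ MaximalAbelian M := by
  have hchain : ∀ c ⊆ {N : Subgroup G | IsMulCommutative N}, IsChain (· ≤ ·) c →
      ∀ y ∈ c, ∃ ub ∈ {N : Subgroup G | IsMulCommutative N}, ∀ z ∈ c, z ≤ ub := by
    intro c hcs hc y hy
    refine ⟨sSup c, ?_, fun z hz => le_sSup hz⟩
    constructor
    constructor
    rintro ⟨a, ha⟩ ⟨b, hb⟩
    rw [Subgroup.mem_sSup_of_directedOn ⟨y, hy⟩ hc.directedOn] at ha hb
    obtain ⟨N₁, hN₁, ha'⟩ := ha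
    obtain ⟨N₂, hN₂, hb'⟩ := hb
    rcases hc.total hN₁ hN₂ with hle | hle
    · have hab : a * b = b * a :=
        congrArg Subtype.val ((hcs hN₂).is_comm.comm ⟨a, hle ha'⟩ ⟨b, hb'⟩)
      exact Subtype.ext hab
    · have hab : a * b = b * a :=
        congrArg Subtype.val ((hcs hN₁).is_comm.comm ⟨a, ha'⟩ ⟨b, hle hb'⟩)
      exact Subtype.ext hab
  obtain ⟨M, hAM, hMmem, hMmax⟩ :=
    zorn_le_nonempty₀ {N : Subgroup G | IsMulCommutative N} hchain A hA
  exact ⟨M, hAM, hMmem, fun N hN hMN => le_antisymm (hMmax hN hMN) hMN⟩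

/-- The group `G = ⟨x, y | [[x,y],y] = 1⟩` is not CSA: the elements
`y₀ = y` and `y₁ = x⁻¹yx` commute, `y₁` is a nontrivial element of
`H = ⟨y₀, y₁⟩` lying also in the conjugate `x⁻¹Hx`, while `x ∉ H`. -/
theorem oneRelGroup_not_isCSA :
    Commute (gyi 0) (gyi 1) ∧
    gyi 1 ≠ 1 ∧
    gx ∉ Subgroup.closure {gyi 0, gyi 1} ∧
    gyi 1 ∈ Subgroup.closure {gyi 0, gyi 1} ⊓
      (Subgroup.closure {gyi 0, gyi 1}).map (MulAut.conj gx⁻¹).toMonoidHom ∧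
    ¬ IsCSA OneRelGroup := by
  refine ⟨hcommute, gyi_one_ne_one, gx_not_mem, ?_, ?_⟩
  · constructor
    · exact Subgroup.subset_closure (Set.mem_insert_iff.mpr (Or.inr rfl))
    · refine ⟨gyi 0, Subgroup.subset_closure (Set.mem_insert _ _), ?_⟩
      show (MulAut.conj gx⁻¹) (gyi 0) = gyi 1
      rw [MulAut.conj_apply, gyi_zero, gyi_one]
      group
  · intro hCSA
    have hAcomm : IsMulCommutative (Subgroup.closure {gyi 0, gyi 1}) := by
      letI : CommGroup (Subgroup.closure {gyi 0, gyi 1}) :=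
        Subgroup.closureCommGroupOfComm (by
          rintro u (rfl | rfl) v (rfl | rfl)
          · rfl
          · exact hcommute
          · exact hcommute.symm
          · rfl)
      exact ⟨⟨fun a b => mul_comm a b⟩⟩
    obtain ⟨M, hAM, hMcomm, hMmax⟩ := exists_maximalAbelian _ hAcomm
    have h0M : gyi 0 ∈ M := hAM (Subgroup.subset_closure (Set.mem_insert _ _))
    have h1M : gyi 1 ∈ M := hAM (Subgroup.subset_closure (Set.mem_insert_iff.mpr (Or.inr rfl)))
    by_cases hxM : gx ∈ M
    · have hc : gx * gy = gy * gx := by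
        have h : gx * gyi 0 = gyi 0 * gx :=
          congrArg Subtype.val (hMcomm.is_comm.comm ⟨gx, hxM⟩ ⟨gyi 0, h0M⟩)
        rwa [gyi_zero] at h
      apply gyi_one_ne_gyi_zero
      rw [gyi_one, gyi_zero, mul_assoc, ← hc, ← mul_assoc, inv_mul_cancel, one_mul]
    · have := hCSA M ⟨hMcomm, hMmax⟩ gx hxM (gyi 0) h0M (by
        have : gx⁻¹ * gyi 0 * gx = gyi 1 := by rw [gyi_zero, gyi_one]
        rw [this]; exact h1M)
      exact gyi_zero_ne_one this
end

section
/- Let A be a malnormal subgroup of a group G, B a subgroup of a group H, φ: A → B an isomorphism, and P = G *_φ H the amalgamated free product. Then H is a malnormal subgroup of P; consequently every malnormal subgroup of H is malnormal in P. -/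
variable {G H : Type} [Group G] [Group H]

/-- The relations identifying `a ∈ A ≤ G` with `φ(a) ∈ H` in the free product. -/
def amalRels (A : Subgroup G) (φ : A →* H) : Set (Monoid.Coprod G H) :=
  {w | ∃ a : A, w = Monoid.Coprod.inl (a : G) * (Monoid.Coprod.inr (φ a))⁻¹}

/-- The amalgamated free product `P = G *_φ H`. -/
def AmalProd (A : Subgroup G) (φ : A →* H) : Type :=
  Monoid.Coprod G H ⧸ Subgroup.normalClosure (amalRels A φ)

instance (A : Subgroup G) (φ : A →* H) : Group (AmalProd A φ) := by
  unfold AmalProd; infer_instance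

/-- The canonical map `H →* G *_φ H`. -/
def amalInr (A : Subgroup G) (φ : A →* H) : H →* AmalProd A φ :=
  (QuotientGroup.mk' (Subgroup.normalClosure (amalRels A φ))).comp Monoid.Coprod.inr


section AuxMalnormalAmal
open Monoid CoprodI PushoutI Function

@[reducible] def Fam (G H : Type) : Bool → Type
  | true => G
  | false => H

instance famGroup {G H : Type} [Group G] [Group H] : ∀ b, Group (Fam G H b)
  | true => ‹Group G›
  | false => ‹Group H›

@[reducible] def famMap (A : Subgroup G) (φ : A →* H) : ∀ b, A →* Fam G H b
  | true => A.subtype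
  | false => φ

def wIdx (w : Word (Fam G H)) : List Bool := w.toList.map Sigma.fst

theorem fstIdx_eq_head_wIdx (w : Word (Fam G H)) : w.fstIdx = (wIdx w).head? := by
  simp [Word.fstIdx, wIdx, List.head?_map]

theorem wIdx_cons {i : Bool} (g : Fam G H i) (w : Word (Fam G H)) (h1 h2) :
    wIdx (Word.cons g w h1 h2) = i :: wIdx w := by
  simp [wIdx, Word.cons]

theorem head?_dropLast {α : Type*} (l : List α) :
    l.dropLast.head? = none ∨ l.dropLast.head? = l.head? := by
  rcases l with _ | ⟨x, _ | ⟨y, t⟩⟩ <;> simp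

theorem reduced_cons (A : Subgroup G) (φ : A →* H) {i : Bool} (g : Fam G H i)
    (w : Word (Fam G H)) (h1 h2) :
    Reduced (famMap A φ) (Word.cons g w h1 h2) ↔
      g ∉ (famMap A φ i).range ∧ Reduced (famMap A φ) w := by
  unfold Reduced
  rw [show (Word.cons g w h1 h2).toList = ⟨i, g⟩ :: w.toList from rfl, List.forall_mem_cons]

theorem reduced_empty (A : Subgroup G) (φ : A →* H) :
    Reduced (famMap A φ) (Word.empty : Word (Fam G H)) := by
  intro l hl; simp [Word.empty] at hl


theorem mul_of_right (A : Subgroup G) (φ : A →* H)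
    (w : Word (Fam G H)) (hw : Reduced (famMap A φ) w) (c : H) :
    ∃ (a : A) (w' : Word (Fam G H)), Reduced (famMap A φ) w' ∧
      (wIdx w' = wIdx w ∨ wIdx w' = wIdx w ++ [false] ∨ wIdx w' = (wIdx w).dropLast) ∧
      (ofCoprodI w.prod : PushoutI (famMap A φ)) * of false c
        = base (famMap A φ) a * ofCoprodI w'.prod := by
  induction w using Word.consRecOn with
  | empty =>
    by_cases hc : c ∈ (famMap A φ false).range
    · obtain ⟨a, rfl⟩ := hc
      exact ⟨a, .empty, reduced_empty A φ, Or.inl rfl,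
        by simp [of_apply_eq_base]⟩
    · refine ⟨1, Word.cons (i := false) c .empty (show (Word.empty : Word (Fam G H)).fstIdx ≠ some false from (Option.some_ne_none false).symm)
        (fun h => hc (by rw [h]; exact one_mem _)), ?_, ?_, ?_⟩
      · rw [reduced_cons]; exact ⟨hc, reduced_empty A φ⟩
      · exact Or.inr (Or.inl (by rw [wIdx_cons]; rfl))
      · simp [Word.prod_cons]
  | cons i g w h1 h2 ih =>
    rw [reduced_cons] at hw
    obtain ⟨hg, hw'⟩ := hw
    obtain ⟨a, w2, hred, hidx, heq⟩ := ih hw'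
    have hbase : (base (famMap A φ) a : PushoutI (famMap A φ)) = of false (φ a) :=
      (of_apply_eq_base (famMap A φ) false a).symm
    by_cases hfi : w2.fstIdx = some i
    · -- merge case : i = false, w empty, w2 a single `H`-letter
      rw [fstIdx_eq_head_wIdx] at hfi
      rw [fstIdx_eq_head_wIdx] at h1
      have hcase : i = false ∧ wIdx w = [] ∧ wIdx w2 = [false] := by
        rcases hidx with h | h | h
        · rw [h] at hfi; exact absurd hfi h1
        · rcases hl : wIdx w with _ | ⟨x, t⟩
          · rw [h, hl] at hfi
            simp only [List.nil_append, List.head?_cons, Option.some.injEq] at hfi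
            exact ⟨hfi.symm, rfl, by rw [h, hl]; simp⟩
          · rw [h, hl] at hfi
            rw [hl] at h1
            simp only [List.cons_append, List.head?_cons] at hfi h1
            exact absurd hfi h1
        · rcases head?_dropLast (wIdx w) with h' | h'
          · rw [h, h'] at hfi; simp at hfi
          · rw [h, h'] at hfi; exact absurd hfi h1
      obtain ⟨hi, hwnil, hw2⟩ := hcase
      subst hi
      have hwe : w = Word.empty := Word.ext (by
        rw [wIdx] at hwnil
        exact List.map_eq_nil_iff.mp hwnil)
      obtain ⟨k, hk⟩ : ∃ k : Fam G H false, w2.toList = [⟨false, k⟩] := by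
        rcases hl : w2.toList with _ | ⟨⟨j, k⟩, t⟩
        · rw [wIdx, hl] at hw2; simp at hw2
        · rw [wIdx, hl] at hw2
          simp only [List.map_cons, List.cons.injEq] at hw2
          obtain ⟨hj, ht⟩ := hw2
          cases j
          · exact ⟨k, by rw [List.map_eq_nil_iff.mp ht]⟩
          · simp at hj
      have hw2prod : w2.prod = CoprodI.of (i := false) (M := Fam G H) k := by
        rw [Word.prod, hk]; simp
      have hkred : k ∉ (famMap A φ false).range :=
        hred ⟨false, k⟩ (by rw [hk]; simp)
      subst hwe
      rw [hw2prod] at heq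
      simp only [Word.prod_empty, map_one, one_mul, ofCoprodI_of] at heq
      -- heq : of false c = base a * of false k
      have key : (ofCoprodI (Word.cons g Word.empty (show (Word.empty : Word (Fam G H)).fstIdx ≠ some false from (Option.some_ne_none false).symm) h2).prod : PushoutI (famMap A φ))
          * of false c = of false (g * (φ a * k)) := by
        rw [Word.prod_cons]
        simp only [Word.prod_empty, map_one, mul_one, map_mul, ofCoprodI_of]
        rw [heq, hbase]
      by_cases hr : g * (φ a * k) ∈ (famMap A φ false).range
      · obtain ⟨a2, ha2⟩ := hr
        refine ⟨a2, .empty, reduced_empty A φ, Or.inr (Or.inr ?_), ?_⟩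
        · simp [wIdx_cons, wIdx, Word.empty]
        · rw [key, ← ha2]
          have : (base (famMap A φ) a2 : PushoutI (famMap A φ)) = of false (famMap A φ false a2) :=
            (of_apply_eq_base (famMap A φ) false a2).symm
          rw [this]
          simp
      · refine ⟨1, Word.cons (i := false) (g * (φ a * k)) .empty
          (show (Word.empty : Word (Fam G H)).fstIdx ≠ some false from (Option.some_ne_none false).symm)
          (fun h => hr (by rw [h]; exact one_mem _)), ?_, ?_, ?_⟩
        · rw [reduced_cons]; exact ⟨hr, reduced_empty A φ⟩
        · exact Or.inl (by rw [wIdx_cons, wIdx_cons])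
        · rw [key, Word.prod_cons]
          simp [Word.prod_cons]
    · -- no merge : prepend the letter `g * famMap i a` to w2
      have hmem : famMap A φ i a ∈ (famMap A φ i).range := ⟨a, rfl⟩
      have hne : g * famMap A φ i a ∉ (famMap A φ i).range := fun hr =>
        hg ((mul_mem_cancel_right hmem).mp hr)
      have hne1 : g * famMap A φ i a ≠ 1 := fun h => hne (h ▸ one_mem _)
      refine ⟨1, Word.cons (g * famMap A φ i a) w2 hfi hne1, ?_, ?_, ?_⟩
      · rw [reduced_cons]; exact ⟨hne, hred⟩
      · rw [wIdx_cons, wIdx_cons]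
        rcases hidx with h | h | h
        · exact Or.inl (by rw [h])
        · exact Or.inr (Or.inl (by rw [h]; rfl))
        · rcases hl : wIdx w with _ | ⟨x, t⟩
          · exact Or.inl (by simp [h, hl])
          · exact Or.inr (Or.inr (by simp [h, hl]))
      · simp only [Word.prod_cons, map_mul, ofCoprodI_of, map_one, one_mul, mul_assoc, heq]
        rw [of_apply_eq_base]

theorem famMap_injective (A : Subgroup G) (φ : A →* H) (hφ : Injective φ) :
    ∀ b, Injective (famMap A φ b)
  | true => A.subtype_injective
  | false => hφ

theorem idx_eq_of_prod_eq (A : Subgroup G) (φ : A →* H) (hφ : Injective φ)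
    {u v : Word (Fam G H)} (hu : Reduced (famMap A φ) u) (hv : Reduced (famMap A φ) v)
    (h : (ofCoprodI u.prod : PushoutI (famMap A φ)) = ofCoprodI v.prod) :
    wIdx u = wIdx v := by
  rcases NormalWord.transversal_nonempty (famMap A φ) (famMap_injective A φ hφ) with ⟨d⟩
  rcases hu.exists_normalWord_prod_eq d with ⟨u', hu1, hu2⟩
  rcases hv.exists_normalWord_prod_eq d with ⟨v', hv1, hv2⟩
  have huv : u' = v' := NormalWord.prod_injective (by rw [hu1, hv1, h])
  show u.toList.map Sigma.fst = v.toList.map Sigma.fst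
  rw [← hu2, ← hv2, huv]

theorem main_lemma (A : Subgroup G) (hA : Malnormal A) (φ : A →* H) (hφ : Injective φ)
    (w : Word (Fam G H)) (hw : Reduced (famMap A φ) w) (b c : H) (hb : b ≠ 1)
    (heq : (of (φ := famMap A φ) false) b * ofCoprodI w.prod
        = ofCoprodI w.prod * of false c) :
    (ofCoprodI w.prod : PushoutI (famMap A φ)) ∈ (of (φ := famMap A φ) false).range := by
  induction w using Word.consRecOn generalizing b c with
  | empty => simp only [Word.prod_empty, map_one]; exact one_mem _
  | cons i g w h1 h2 ih =>
    rw [reduced_cons] at hw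
    obtain ⟨hg, hw'⟩ := hw
    cases i with
    | false =>
      have h0 : (of (φ := famMap A φ) false) b * (of false g * ofCoprodI w.prod)
          = of false g * (ofCoprodI w.prod * of false c) := by
        rw [Word.prod_cons, map_mul, ofCoprodI_of] at heq
        exact heq.trans (mul_assoc _ _ _)
      have heq' : (of (φ := famMap A φ) false) (g⁻¹ * b * g) * ofCoprodI w.prod
          = ofCoprodI w.prod * of false c := by
        rw [map_mul, map_mul, map_inv, mul_assoc, mul_assoc, h0, inv_mul_cancel_left]
      have hb' : g⁻¹ * b * g ≠ 1 := by
        intro h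
        apply hb
        have := congrArg (fun x => g * x * g⁻¹) h
        simpa [mul_assoc] using this
      have hmemw := ih hw' (g⁻¹ * b * g) c hb' heq'
      rw [Word.prod_cons, map_mul, ofCoprodI_of]
      exact mul_mem ⟨g, rfl⟩ hmemw
    | true =>
      exfalso
      obtain ⟨a, w2, hred2, hidx2, heqM⟩ := mul_of_right A φ w hw' c
      have h1h : (wIdx w).head? ≠ some true := by
        rw [← fstIdx_eq_head_wIdx]; exact h1
      have hfi2 : w2.fstIdx ≠ some true := by
        rw [fstIdx_eq_head_wIdx]
        rcases hidx2 with h | h | h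
        · rw [h]; exact h1h
        · rw [h]; rcases hl : wIdx w with _ | ⟨x, t⟩
          · simp
          · rw [hl] at h1h; simp only [List.cons_append, List.head?_cons] at h1h ⊢; exact h1h
        · rw [h]; rcases head?_dropLast (wIdx w) with h' | h'
          · rw [h']; simp
          · rw [h']; exact h1h
      have hamem : (famMap A φ true) a ∈ (famMap A φ true).range := ⟨a, rfl⟩
      have hne : g * (famMap A φ true) a ∉ (famMap A φ true).range := fun hr =>
        hg ((mul_mem_cancel_right hamem).mp hr)
      have hne1 : g * (famMap A φ true) a ≠ 1 := fun h => hne (h ▸ one_mem _)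
      have hv : Reduced (famMap A φ) (Word.cons (g * famMap A φ true a) w2 hfi2 hne1) :=
        (reduced_cons A φ _ _ _ _).mpr ⟨hne, hred2⟩
      have hRHS : ofCoprodI (Word.cons g w h1 h2).prod * (of (φ := famMap A φ) false) c
          = ofCoprodI (Word.cons (g * famMap A φ true a) w2 hfi2 hne1).prod := by
        rw [Word.prod_cons, Word.prod_cons, map_mul, map_mul, ofCoprodI_of, ofCoprodI_of,
          map_mul, of_apply_eq_base, mul_assoc, heqM, mul_assoc]
      by_cases hbr : b ∈ (famMap A φ false).range
      · -- b = φ a₀ : push it through the first letter and use malnormality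
        obtain ⟨a0, rfl⟩ := hbr
        have hgA : g ∉ (famMap A φ true).range := hg
        have ha0mem : (famMap A φ true) a0 ∈ (famMap A φ true).range := ⟨a0, rfl⟩
        have ha0g : (famMap A φ true) a0 * g ∉ (famMap A φ true).range := fun hr =>
          hgA ((mul_mem_cancel_left ha0mem).mp hr)
        have ha0g1 : (famMap A φ true) a0 * g ≠ 1 := fun h => ha0g (h ▸ one_mem _)
        have hu : Reduced (famMap A φ) (Word.cons ((famMap A φ true) a0 * g) w h1 ha0g1) :=
          (reduced_cons A φ _ _ _ _).mpr ⟨ha0g, hw'⟩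
        have hLHS : (of (φ := famMap A φ) false) ((famMap A φ false) a0)
            * ofCoprodI (Word.cons g w h1 h2).prod
            = ofCoprodI (Word.cons ((famMap A φ true) a0 * g) w h1 ha0g1).prod := by
          rw [Word.prod_cons, Word.prod_cons, map_mul, map_mul, ofCoprodI_of, ofCoprodI_of,
            map_mul, of_apply_eq_base, of_apply_eq_base, mul_assoc]
        have hEq : ofCoprodI (Word.cons ((famMap A φ true) a0 * g) w h1 ha0g1).prod
            = (ofCoprodI (Word.cons (g * famMap A φ true a) w2 hfi2 hne1).prod :
                PushoutI (famMap A φ)) := by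
          rw [← hLHS, heq, hRHS]
        have hidxeq := idx_eq_of_prod_eq A φ hφ hu hv hEq
        rw [wIdx_cons, wIdx_cons] at hidxeq
        have hww2 : wIdx w = wIdx w2 := by
          rw [List.cons.injEq] at hidxeq
          exact hidxeq.2
        have hEq2 : (ofCoprodI w.prod : PushoutI (famMap A φ))
            = of true (((famMap A φ true) a0 * g)⁻¹ * (g * famMap A φ true a))
              * ofCoprodI w2.prod := by
          have h5 := hEq
          simp only [Word.prod_cons, map_mul, ofCoprodI_of, mul_assoc] at h5
          simp only [map_mul, map_inv, mul_inv_rev, mul_assoc]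
          rw [← h5]
          simp only [inv_mul_cancel_left]
        set t : G := ((famMap A φ true) a0 * g)⁻¹ * (g * famMap A φ true a) with htdef
        have htA : t ∈ (famMap A φ true).range := by
          by_contra htA
          have ht1 : t ≠ 1 := fun h => htA (h ▸ one_mem _)
          have hvt : Reduced (famMap A φ) (Word.cons t w2 hfi2 ht1) :=
            (reduced_cons A φ _ _ _ _).mpr ⟨htA, hred2⟩
          have hidx3 := idx_eq_of_prod_eq A φ hφ hw' hvt (by
            rw [Word.prod_cons, map_mul, ofCoprodI_of, ← hEq2])
          rw [wIdx_cons, ← hww2] at hidx3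
          exact List.cons_ne_self _ _ hidx3.symm
        -- now malnormality
        obtain ⟨a1, ha1⟩ := htA
        have htmemA : t ∈ A := by
          rw [← ha1]; exact a1.2
        have hconjA : g⁻¹ * ((a0 : G))⁻¹ * g ∈ A := by
          have hform : g⁻¹ * ((a0 : G))⁻¹ * g = t * ((a : G))⁻¹ := by
            rw [htdef]
            show g⁻¹ * ((a0 : G))⁻¹ * g = ((a0 : G) * g)⁻¹ * (g * (a : G)) * ((a : G))⁻¹
            group
          rw [hform]
          exact mul_mem htmemA (inv_mem a.2)
        have hgnA : g ∉ A := fun h => hgA ⟨⟨g, h⟩, rfl⟩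
        have ha0one : ((a0 : G))⁻¹ = 1 := hA g hgnA ((a0 : G))⁻¹ (inv_mem a0.2) hconjA
        have : (a0 : G) = 1 := by
          rw [← inv_inv (a0 : G), ha0one, inv_one]
        have ha0 : a0 = 1 := Subtype.ext this
        exact hb (by rw [ha0, map_one])
      · -- b not in the image of A : index sequences have different heads
        have hb1 : b ≠ 1 := hb
        have hfib : (Word.cons g w h1 h2).fstIdx ≠ some false := by
          rw [Word.fstIdx_cons]; simp
        have hu : Reduced (famMap A φ) (Word.cons b (Word.cons g w h1 h2) hfib hb1) :=
          (reduced_cons A φ _ _ _ _).mpr ⟨hbr, (reduced_cons A φ _ _ _ _).mpr ⟨hg, hw'⟩⟩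
        have hEq : ofCoprodI (Word.cons b (Word.cons g w h1 h2) hfib hb1).prod
            = (ofCoprodI (Word.cons (g * famMap A φ true a) w2 hfi2 hne1).prod :
                PushoutI (famMap A φ)) := by
          rw [Word.prod_cons, map_mul, ofCoprodI_of, heq, hRHS]
        have hidxeq := idx_eq_of_prod_eq A φ hφ hu hv hEq
        rw [wIdx_cons, wIdx_cons, wIdx_cons] at hidxeq
        simp at hidxeq


theorem exists_decomp (A : Subgroup G) (φ : A →* H) (hφ : Injective φ)
    (x : PushoutI (famMap A φ)) :
    ∃ (h : A) (w : Word (Fam G H)), Reduced (famMap A φ) w ∧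
      x = base (famMap A φ) h * ofCoprodI w.prod := by
  classical
  rcases NormalWord.transversal_nonempty (famMap A φ) (famMap_injective A φ hφ) with ⟨d⟩
  refine ⟨(NormalWord.equiv (d := d) x).head, (NormalWord.equiv (d := d) x).toWord, ?_, ?_⟩
  · rintro ⟨i, g⟩ hg ⟨a, ha⟩
    have hset := (NormalWord.equiv (d := d) x).normalized i g hg
    have hne := (NormalWord.equiv (d := d) x).toWord.ne_one ⟨i, g⟩ hg
    have hpair := (d.compl i).1
      (a₁ := (⟨⟨g, ⟨a, ha⟩⟩, ⟨1, d.one_mem i⟩⟩ : _))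
      (a₂ := (⟨⟨1, one_mem _⟩, ⟨g, hset⟩⟩ : _)) (by simp)
    have : g = 1 := by
      have := congrArg (fun p => (p.2 : Fam G H i)) hpair
      simpa using this.symm
    exact hne this
  · exact ((NormalWord.equiv (d := d)).symm_apply_apply x).symm

theorem malnormal_of_false_range (A : Subgroup G) (hA : Malnormal A) (φ : A →* H)
    (hφ : Injective φ) :
    Malnormal (of (φ := famMap A φ) false).range := by
  intro x hx y hy hconj
  rcases hy with ⟨k, rfl⟩
  by_contra hy1
  rcases hconj with ⟨c, hc⟩
  obtain ⟨h, w, hred, rfl⟩ := exists_decomp A φ hφ x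
  have hbase : (base (famMap A φ) h : PushoutI (famMap A φ)) = of false (φ h) :=
    (of_apply_eq_base (famMap A φ) false h).symm
  have heq : (of (φ := famMap A φ) false) ((φ h)⁻¹ * (k * φ h)) * ofCoprodI w.prod
      = ofCoprodI w.prod * of false c := by
    rw [map_mul, map_mul, map_inv, ← hbase, hc]
    group
  have hk1 : (φ h)⁻¹ * (k * φ h) ≠ 1 := by
    intro hone
    apply hy1
    have : k = 1 := by
      have := congrArg (fun z => (φ h) * z * (φ h)⁻¹) hone
      simpa [mul_assoc] using this
    rw [this, map_one]
  have hmem := main_lemma A hA φ hφ w hred _ c hk1 heq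
  exact hx (mul_mem ⟨φ h, hbase.symm⟩ hmem)

theorem malnormal_map_pushout (A : Subgroup G) (hA : Malnormal A) (φ : A →* H)
    (hφ : Injective φ) (K : Subgroup H) (hK : Malnormal K) :
    Malnormal (K.map (of (φ := famMap A φ) false)) := by
  intro x hx y hy hconj
  rcases hy with ⟨k, hkK, rfl⟩
  by_cases hxr : x ∈ (of (φ := famMap A φ) false).range
  · rcases hxr with ⟨h0, rfl⟩
    have hh0 : h0 ∉ K := fun hmem => hx ⟨h0, hmem, rfl⟩
    rcases hconj with ⟨c, hcK, hc⟩
    have hinj := of_injective (famMap_injective A φ hφ) false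
    have hkey : h0⁻¹ * k * h0 = c := by
      apply hinj
      rw [map_mul, map_mul, map_inv, hc]
    have hk1 : k = 1 := hK h0 hh0 k hkK (hkey ▸ hcK)
    rw [hk1, map_one]
  · have hrange : x⁻¹ * (of (φ := famMap A φ) false) k * x ∈
        (of (φ := famMap A φ) false).range := by
      rcases hconj with ⟨c, _, hc⟩
      exact ⟨c, hc⟩
    have := malnormal_of_false_range A hA φ hφ x hxr (of false k) ⟨k, rfl⟩ hrange
    exact this

def pushLift (A : Subgroup G) (φ : A →* H) : Coprod G H →* PushoutI (famMap A φ) :=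
  Coprod.lift (of (φ := famMap A φ) true) (of (φ := famMap A φ) false)

theorem pushLift_ker (A : Subgroup G) (φ : A →* H) :
    Subgroup.normalClosure (amalRels A φ) ≤ (pushLift A φ).ker := by
  apply Subgroup.normalClosure_le_normal
  rintro _ ⟨a, rfl⟩
  have h1 : (pushLift A φ) (Coprod.inl ((a : A) : G)) = base (famMap A φ) a := by
    rw [pushLift, Coprod.lift_apply_inl]
    exact of_apply_eq_base (famMap A φ) true a
  have h2 : (pushLift A φ) (Coprod.inr (φ a)) = base (famMap A φ) a := by
    rw [pushLift, Coprod.lift_apply_inr]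
    exact of_apply_eq_base (famMap A φ) false a
  show _ ∈ MonoidHom.ker (pushLift A φ)
  rw [MonoidHom.mem_ker, map_mul, map_inv, h1, h2, mul_inv_cancel]

def toPush (A : Subgroup G) (φ : A →* H) : AmalProd A φ →* PushoutI (famMap A φ) :=
  QuotientGroup.lift _ (pushLift A φ) (pushLift_ker A φ)

def fromFam (A : Subgroup G) (φ : A →* H) : ∀ b, Fam G H b →* AmalProd A φ
  | true => (QuotientGroup.mk' (Subgroup.normalClosure (amalRels A φ))).comp Coprod.inl
  | false => (QuotientGroup.mk' (Subgroup.normalClosure (amalRels A φ))).comp Coprod.inr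

theorem fromFam_comp (A : Subgroup G) (φ : A →* H) :
    ∀ b, (fromFam A φ b).comp (famMap A φ b) = (amalInr A φ).comp φ
  | false => rfl
  | true => by
      ext a
      show (QuotientGroup.mk' (Subgroup.normalClosure (amalRels A φ))) (Coprod.inl ((a : A) : G))
        = (QuotientGroup.mk' (Subgroup.normalClosure (amalRels A φ))) (Coprod.inr (φ a))
      apply mul_inv_eq_one.mp
      rw [← map_inv, ← map_mul]
      exact (QuotientGroup.eq_one_iff _).mpr
        (Subgroup.subset_normalClosure ⟨a, rfl⟩)

def fromPush (A : Subgroup G) (φ : A →* H) : PushoutI (famMap A φ) →* AmalProd A φ :=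
  PushoutI.lift (fromFam A φ) ((amalInr A φ).comp φ) (fromFam_comp A φ)

theorem toPush_comp_amalInr (A : Subgroup G) (φ : A →* H) :
    (toPush A φ).comp (amalInr A φ) = of (φ := famMap A φ) false := by
  ext h
  show toPush A φ (QuotientGroup.mk (Coprod.inr h)) = of false h
  exact Coprod.lift_apply_inr (of (φ := famMap A φ) true) (of (φ := famMap A φ) false) h

theorem left_inv_hom (A : Subgroup G) (φ : A →* H) :
    (fromPush A φ).comp (toPush A φ) = MonoidHom.id _ := by
  apply QuotientGroup.monoidHom_ext
  apply Coprod.hom_ext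
  · ext g
    show fromPush A φ (toPush A φ (QuotientGroup.mk (Coprod.inl g)))
      = QuotientGroup.mk (Coprod.inl g)
    have h1 : toPush A φ (QuotientGroup.mk (Coprod.inl g)) = of (φ := famMap A φ) true g :=
      Coprod.lift_apply_inl (of (φ := famMap A φ) true) (of (φ := famMap A φ) false) g
    rw [h1, fromPush, PushoutI.lift_of]
    rfl
  · ext h
    show fromPush A φ (toPush A φ (QuotientGroup.mk (Coprod.inr h)))
      = QuotientGroup.mk (Coprod.inr h)
    have h1 : toPush A φ (QuotientGroup.mk (Coprod.inr h)) = of (φ := famMap A φ) false h :=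
      Coprod.lift_apply_inr (of (φ := famMap A φ) true) (of (φ := famMap A φ) false) h
    rw [h1, fromPush, PushoutI.lift_of]
    rfl

theorem toPush_leftInverse (A : Subgroup G) (φ : A →* H) (x : AmalProd A φ) :
    fromPush A φ (toPush A φ x) = x :=
  DFunLike.congr_fun (left_inv_hom A φ) x

theorem toPush_injective (A : Subgroup G) (φ : A →* H) : Injective (toPush A φ) :=
  Function.LeftInverse.injective (toPush_leftInverse A φ)

theorem malnormal_comap {P Q : Type} [Group P] [Group Q] (f : P →* Q) (hf : Injective f)
    (S : Subgroup Q) (hS : Malnormal S) : Malnormal (S.comap f) := by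
  intro x hx y hy hc
  have h3 : (f x)⁻¹ * f y * f x ∈ S := by
    rw [← map_inv, ← map_mul, ← map_mul]
    exact hc
  have := hS (f x) hx (f y) hy h3
  exact hf (by rw [this, map_one])

theorem amalInr_range_eq (A : Subgroup G) (φ : A →* H) :
    (amalInr A φ).range = ((of (φ := famMap A φ) false).range).comap (toPush A φ) := by
  ext x
  constructor
  · rintro ⟨h, rfl⟩
    exact ⟨h, (DFunLike.congr_fun (toPush_comp_amalInr A φ) h).symm⟩
  · rintro ⟨h, hh⟩
    refine ⟨h, ?_⟩
    have := congrArg (fromPush A φ) hh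
    rw [toPush_leftInverse A φ] at this
    rw [← this]
    show fromPush A φ (of false h) = amalInr A φ h
    rw [fromPush, PushoutI.lift_of]
    rfl

theorem amal_map_eq (A : Subgroup G) (φ : A →* H) (K : Subgroup H) :
    K.map (amalInr A φ) = (K.map (of (φ := famMap A φ) false)).comap (toPush A φ) := by
  ext x
  constructor
  · rintro ⟨k, hk, rfl⟩
    exact ⟨k, hk, (DFunLike.congr_fun (toPush_comp_amalInr A φ) k).symm⟩
  · rintro ⟨k, hk, hh⟩
    refine ⟨k, hk, ?_⟩
    have := congrArg (fromPush A φ) hh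
    rw [toPush_leftInverse A φ] at this
    rw [← this]
    show fromPush A φ (of false k) = amalInr A φ k
    rw [fromPush, PushoutI.lift_of]
    rfl

theorem malnormal_final (A : Subgroup G) (hA : Malnormal A)
    (φ : A →* H) (hφ : Function.Injective φ) :
    Malnormal (amalInr A φ).range ∧
    ∀ K : Subgroup H, Malnormal K → Malnormal (K.map (amalInr A φ)) := by
  constructor
  · rw [amalInr_range_eq A φ]
    exact malnormal_comap _ (toPush_injective A φ) _ (malnormal_of_false_range A hA φ hφ)
  · intro K hK
    rw [amal_map_eq A φ]
    exact malnormal_comap _ (toPush_injective A φ) _ (malnormal_map_pushout A hA φ hφ K hK)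

end AuxMalnormalAmal

/-- If `A` is a malnormal subgroup of `G` and `φ : A → B ≤ H` is an isomorphism
onto a subgroup of `H`, then `H` is malnormal in the amalgamated product
`P = G *_φ H`; consequently every malnormal subgroup of `H` is malnormal in `P`. -/
theorem malnormal_in_amalgamated_product (A : Subgroup G) (hA : Malnormal A)
    (φ : A →* H) (hφ : Function.Injective φ) :
    Malnormal (amalInr A φ).range ∧
    ∀ K : Subgroup H, Malnormal K → Malnormal (K.map (amalInr A φ)) :=
  malnormal_final A hA φ hφ
end
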